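/- Let v_1, …, v_d ∈ ℤ^n be linearly independent. A coefficient vector λ ∈ ℝ^d_{>0} with Σ λ_i v_i ∈ ℤ^n is atomic if and only if deg(λ) ≥ level(λ), i.e., if and only if λ_j ≤ 1 for all indices j < level(λ). -/

import Mathlib

/-- `Covers mu lam` means `lam ∈ mu + cone_ℤ(e_1, …, e_{level mu})`:
`lam = mu + δ` for a non-negative integer vector `δ` supported on the first
`level mu` coordinates. -/
def Covers {d : ℕ} (mu lam : Fin d → ℝ) : Prop :=
  ∃ δ : Fin d → ℤ, (∀ i, 0 ≤ δ i) ∧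
    (∀ i : Fin d, ⌈∑ j, mu j⌉ < (i : ℕ) + 1 → δ i = 0) ∧
    ∀ i, lam i = mu i + (δ i : ℝ)

/-- The set `T k` of (coefficient vectors of) atomic lattice points at level `k` in the
half-open fundamental simplex of the cone over `v`: all lattice points at level `1`
are in `T 1`, and inductively a lattice point of the half-open fundamental simplex at
level `k` is in `T k` iff it is not covered by an atomic point at a lower level. -/
def T (d n : ℕ) (v : Fin d → Fin n → ℤ) : ℕ → Set (Fin d → ℝ)
  | k =>
    {lam | (∀ i, 0 < lam i) ∧ (∑ i, lam i ≤ (d : ℝ)) ∧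
      (∀ j : Fin n, ∃ z : ℤ, (∑ i, lam i * (v i j : ℝ)) = (z : ℝ)) ∧
      ⌈∑ i, lam i⌉ = (k : ℤ) ∧
      ∀ i, i < k → ∀ mu ∈ T d n v i, ¬ Covers mu lam}

lemma mem_T_of_deg (d n : ℕ) (v : Fin d → Fin n → ℤ) (lam : Fin d → ℝ)
    (hpos : ∀ i, 0 < lam i)
    (hlat : ∀ j : Fin n, ∃ z : ℤ, (∑ i, lam i * (v i j : ℝ)) = (z : ℝ))
    (k : ℕ) (hk : ⌈∑ i, lam i⌉ = (k : ℤ))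
    (h : ∀ j : Fin d, ((j : ℕ) + 1 : ℤ) < ⌈∑ i, lam i⌉ → lam j ≤ 1) :
    lam ∈ T d n v k := by
  have hkd : k ≤ d := by
    by_contra hdk
    push_neg at hdk
    have hall : ∀ j : Fin d, lam j ≤ 1 := by
      intro j
      refine h j ?_
      rw [hk]
      have := j.isLt
      exact_mod_cast by omega
    have hSd : (∑ i, lam i) ≤ (d : ℝ) := by
      calc (∑ i, lam i) ≤ ∑ _i : Fin d, (1 : ℝ) := Finset.sum_le_sum fun i _ => hall i
      _ = d := by simp
    have h1 : (k : ℤ) ≤ (d : ℤ) := by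
      rw [← hk]
      exact Int.ceil_le.mpr (by exact_mod_cast hSd)
    omega
  have hSd : (∑ i, lam i) ≤ (d : ℝ) := by
    have h1 : (∑ i, lam i) ≤ (⌈∑ i, lam i⌉ : ℝ) := Int.le_ceil _
    rw [hk] at h1
    calc (∑ i, lam i) ≤ ((k : ℤ) : ℝ) := h1
    _ ≤ d := by exact_mod_cast hkd
  rw [T]
  refine ⟨hpos, hSd, hlat, hk, ?_⟩
  intro i hi mu hmu hcov
  rw [T] at hmu
  obtain ⟨hmupos, -, -, hmuceil, -⟩ := hmu
  obtain ⟨δ, hδ0, hδsupp, hδeq⟩ := hcov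
  have hδz : ∀ i', δ i' = 0 := by
    intro i'
    by_cases hc : ⌈∑ j, mu j⌉ < (i' : ℕ) + 1
    · exact hδsupp i' hc
    · push_neg at hc
      rw [hmuceil] at hc
      have hle : lam i' ≤ 1 := by
        refine h i' ?_
        rw [hk]
        have hi' : (i : ℤ) < (k : ℤ) := by exact_mod_cast hi
        omega
      by_contra hne
      have h1 : 1 ≤ δ i' := lt_of_le_of_ne (hδ0 i') (Ne.symm hne)
      have : (1 : ℝ) < lam i' := by
        rw [hδeq i']
        have : (1 : ℝ) ≤ (δ i' : ℝ) := by exact_mod_cast h1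
        linarith [hmupos i']
      linarith
  have hsum : (∑ j, lam j) = ∑ j, mu j := by
    refine Finset.sum_congr rfl fun i' _ => ?_
    rw [hδeq i', hδz i']
    simp
  rw [hsum, hmuceil] at hk
  omega

theorem hard (d n : ℕ) (v : Fin d → Fin n → ℤ)
    (lam : Fin d → ℝ) (hpos : ∀ i, 0 < lam i)
    (k : ℕ) (hmem : lam ∈ T d n v k) :
    ∀ j : Fin d, ((j : ℕ) + 1 : ℤ) < ⌈∑ i, lam i⌉ → lam j ≤ 1 := by
  intro j hj
  by_contra hlj
  push_neg at hlj
  rw [T] at hmem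
  obtain ⟨hpos', hSd, hlat', hceil, hblock⟩ := hmem
  rw [hceil] at hj
  have hk2 : 2 ≤ k := by
    have := j.2
    omega
  have hkd : k ≤ d := by
    have h1 : (k : ℤ) ≤ (d : ℤ) := by
      rw [← hceil]
      exact Int.ceil_le.mpr (by exact_mod_cast hSd)
    exact_mod_cast h1
  -- the capped coefficients
  set cc : ℕ → ℤ := fun m => if h : m < d then ⌈lam ⟨m, h⟩⌉ - 1 else 0 with hccdef
  have hcc0 : ∀ m, 0 ≤ cc m := by
    intro m
    simp only [hccdef]
    split
    · rename_i hm
      have : 0 < ⌈lam ⟨m, hm⟩⌉ := Int.ceil_pos.mpr (hpos _)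
      omega
    · omega
  have hccR : ∀ i : Fin d, (cc (i : ℕ) : ℝ) < lam i := by
    intro i
    simp only [hccdef, dif_pos i.isLt, Fin.eta]
    push_cast
    linarith [Int.ceil_lt_add_one (lam i)]
  have hccR' : ∀ i : Fin d, lam i - (cc (i : ℕ) : ℝ) ≤ 1 := by
    intro i
    simp only [hccdef, dif_pos i.isLt, Fin.eta]
    push_cast
    linarith [Int.le_ceil (lam i)]
  have hccj : 1 ≤ cc (j : ℕ) := by
    simp only [hccdef, dif_pos j.isLt, Fin.eta]
    have : (1 : ℤ) < ⌈lam j⌉ := by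
      rw [Int.lt_ceil]
      exact_mod_cast hlj
    omega
  set Sf : ℕ → ℤ := fun t => ∑ m ∈ Finset.range t, cc m with hSfdef
  have hSfmono : ∀ s t, s ≤ t → Sf s ≤ Sf t := by
    intro s t hst
    exact Finset.sum_le_sum_of_subset_of_nonneg (Finset.range_subset_range.mpr hst)
      (fun m _ _ => hcc0 m)
  set g : ℕ → ℤ := fun t => (k : ℤ) - ((t : ℤ) + 1) - Sf t with hgdef
  have hex : ∃ t, g t < 0 := by
    refine ⟨k - 1, ?_⟩
    have hjm : (j : ℕ) ∈ Finset.range (k - 1) := by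
      refine Finset.mem_range.mpr ?_
      have : ((j : ℕ) : ℤ) + 1 < (k : ℤ) := hj
      omega
    have h1 : cc (j : ℕ) ≤ Sf (k - 1) :=
      Finset.single_le_sum (fun m _ => hcc0 m) hjm
    have h2 : ((k - 1 : ℕ) : ℤ) = (k : ℤ) - 1 := by omega
    simp only [hgdef, h2]
    omega
  set l : ℕ := Nat.find hex with hldef
  have hlneg : g l < 0 := Nat.find_spec hex
  have hlmin : ∀ m, m < l → 0 ≤ g m := fun m hm => le_of_not_gt (Nat.find_min hex hm)
  have hl1 : 1 ≤ l := by
    rcases Nat.eq_zero_or_pos l with h0 | h1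
    · exfalso
      rw [h0] at hlneg
      have : Sf 0 = 0 := Finset.sum_range_zero _
      simp only [hgdef] at hlneg
      rw [this] at hlneg
      push_cast at hlneg
      omega
    · exact h1
  have hlk : l ≤ k - 1 := Nat.find_min' hex (by
    have hjm : (j : ℕ) ∈ Finset.range (k - 1) := by
      refine Finset.mem_range.mpr ?_
      have : ((j : ℕ) : ℤ) + 1 < (k : ℤ) := hj
      omega
    have h1 : cc (j : ℕ) ≤ Sf (k - 1) :=
      Finset.single_le_sum (fun m _ => hcc0 m) hjm
    have h2 : ((k - 1 : ℕ) : ℤ) = (k : ℤ) - 1 := by omega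
    simp only [hgdef, h2]
    omega)
  have hlk' : l < k := by omega
  have hld : l ≤ d := by omega
  have hl1' : l - 1 + 1 = l := Nat.succ_pred_eq_of_pos hl1
  set w : ℤ := (k : ℤ) - (l : ℤ) - Sf (l - 1) with hwdef
  have hw0 : 0 ≤ w := by
    have := hlmin (l - 1) (by omega)
    simp only [hgdef] at this
    have hcast : ((l - 1 : ℕ) : ℤ) = (l : ℤ) - 1 := by omega
    rw [hcast] at this
    simp only [hwdef]
    omega
  have hSfrec : Sf l = Sf (l - 1) + cc (l - 1) := by
    conv_lhs => rw [← hl1']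
    exact Finset.sum_range_succ cc (l - 1)
  have hwcc : w ≤ cc (l - 1) := by
    simp only [hgdef] at hlneg
    rw [hSfrec] at hlneg
    simp only [hwdef]
    omega
  -- the covering vector
  set δn : ℕ → ℤ := fun m => if m < l - 1 then cc m else if m = l - 1 then w else 0
    with hδndef
  have hδn0 : ∀ m, 0 ≤ δn m := by
    intro m
    simp only [hδndef]
    split
    · exact hcc0 m
    · split
      · exact hw0
      · omega
  have hδncc : ∀ m, δn m ≤ cc m := by
    intro m
    simp only [hδndef]
    split
    · omega
    · split
      · rename_i h1 h2
        rw [h2]; exact hwcc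
      · exact hcc0 m
  have hδnz : ∀ m, l ≤ m → δn m = 0 := by
    intro m hm
    simp only [hδndef]
    rw [if_neg (by omega), if_neg (by omega)]
  set δ : Fin d → ℤ := fun i => δn i with hδdef
  set mu : Fin d → ℝ := fun i => lam i - (δ i : ℝ) with hmudef
  have hδsum : ∑ i : Fin d, δ i = (k : ℤ) - l := by
    have h1 : ∑ i : Fin d, δ i = ∑ m ∈ Finset.range d, δn m :=
      Fin.sum_univ_eq_sum_range (fun m => δn m) d
    have h2 : ∑ m ∈ Finset.range d, δn m = ∑ m ∈ Finset.range l, δn m := by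
      refine (Finset.sum_subset (Finset.range_subset_range.mpr hld) ?_).symm
      intro m _ hm
      exact hδnz m (by simpa using Finset.mem_range.not.mp hm)
    have h3 : ∑ m ∈ Finset.range l, δn m = Sf (l - 1) + w := by
      conv_lhs => rw [← hl1']
      rw [Finset.sum_range_succ]
      congr 1
      · refine Finset.sum_congr rfl fun m hm => ?_
        simp only [hδndef]
        rw [if_pos (Finset.mem_range.mp hm)]
      · simp only [hδndef]
        rw [if_neg (by omega)]
        simp
    rw [h1, h2, h3]
    simp only [hwdef]
    ring
  have hmusum : ∑ i, mu i = (∑ i, lam i) - (((k : ℤ) - l : ℤ) : ℝ) := by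
    simp only [hmudef]
    rw [Finset.sum_sub_distrib]
    congr 1
    rw [← hδsum]
    push_cast
    ring
  have hmuceil : ⌈∑ i, mu i⌉ = (l : ℤ) := by
    rw [hmusum, Int.ceil_sub_intCast, hceil]
    ring
  have hmupos : ∀ i, 0 < mu i := by
    intro i
    simp only [hmudef]
    have h1 : (δ i : ℝ) ≤ (cc (i : ℕ) : ℝ) := by exact_mod_cast hδncc (i : ℕ)
    linarith [hccR i]
  have hmulat : ∀ jj : Fin n, ∃ z : ℤ, (∑ i, mu i * (v i jj : ℝ)) = (z : ℝ) := by
    intro jj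
    obtain ⟨z, hz⟩ := hlat' jj
    refine ⟨z - ∑ i, δ i * v i jj, ?_⟩
    simp only [hmudef]
    have : ∑ i, (lam i - (δ i : ℝ)) * (v i jj : ℝ)
        = (∑ i, lam i * (v i jj : ℝ)) - ∑ i, (δ i : ℝ) * (v i jj : ℝ) := by
      rw [← Finset.sum_sub_distrib]
      exact Finset.sum_congr rfl fun i _ => by ring
    rw [this, hz]
    push_cast
    ring
  have hmu1 : ∀ i : Fin d, ((i : ℕ) + 1 : ℤ) < ⌈∑ i, mu i⌉ → mu i ≤ 1 := by
    intro i hi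
    rw [hmuceil] at hi
    have hil : (i : ℕ) < l - 1 := by omega
    simp only [hmudef, hδdef]
    have : δn (i : ℕ) = cc (i : ℕ) := by
      simp only [hδndef]
      rw [if_pos hil]
    rw [this]
    exact hccR' i
  have hmuT : mu ∈ T d n v l := mem_T_of_deg d n v mu hmupos hmulat l hmuceil hmu1
  refine hblock l hlk' mu hmuT ⟨δ, fun i => hδn0 (i : ℕ), ?_, ?_⟩
  · intro i hi
    rw [hmuceil] at hi
    exact hδnz (i : ℕ) (by omega)
  · intro i
    simp only [hmudef]
    ring

/-- Characterization of atomicity: a coefficient vector `lam ∈ ℝ^d_{>0}` of a lattice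
point in the open cone over linearly independent `v 0, …, v (d-1) ∈ ℤ^n` is atomic
(i.e. lies in some `T k`) if and only if `lam j ≤ 1` for all indices `j` preceding the
level of `lam`, i.e. iff `deg lam ≥ level lam`. -/
theorem atomic_iff_deg_ge_level (d n : ℕ) (v : Fin d → Fin n → ℤ)
    (hv : LinearIndependent ℝ fun i => fun j => ((v i j : ℝ)))
    (lam : Fin d → ℝ) (hpos : ∀ i, 0 < lam i)
    (hlat : ∀ j : Fin n, ∃ z : ℤ, (∑ i, lam i * (v i j : ℝ)) = (z : ℝ)) :
    (∃ k, lam ∈ T d n v k) ↔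
      ∀ j : Fin d, ((j : ℕ) + 1 : ℤ) < ⌈∑ i, lam i⌉ → lam j ≤ 1 := by
  constructor
  · rintro ⟨k, hmem⟩
    exact hard d n v lam hpos k hmem
  · intro h
    have hS0 : (0 : ℝ) ≤ ∑ i, lam i := Finset.sum_nonneg fun i _ => (hpos i).le
    have hc0 : 0 ≤ ⌈∑ i, lam i⌉ := Int.ceil_nonneg hS0
    refine ⟨(⌈∑ i, lam i⌉).toNat, mem_T_of_deg d n v lam hpos hlat _ ?_ h⟩
    omega
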